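/- For all finite posets R and Q, there is a bijection between H(R, D(Q)), the set of order homomorphisms from R to the down-set lattice of Q, and H(Q, D(R)), the set of order homomorphisms from Q to the down-set lattice of R. -/

import Mathlib

/-- Auxiliary construction: flip a homomorphism `R →o LowerSet Q` to `Q →o LowerSet R`. -/
def flipHom17 {R Q : Type*} [PartialOrder R] [PartialOrder Q]
    (f : R →o LowerSet Q) : Q →o LowerSet R where
  toFun q := ⟨{r | q ∉ f r}, fun r r' h hr hq => hr ((f.monotone h) hq)⟩
  monotone' q q' hq r hr := fun h => hr ((f r).lower hq h)

theorem flipHom17_flip {R Q : Type*} [PartialOrder R] [PartialOrder Q]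
    (f : R →o LowerSet Q) : flipHom17 (flipHom17 f) = f := by
  ext r q
  simp [flipHom17]
  exact not_not (a := q ∈ f r)

/-- For all finite posets `R` and `Q`, there is a bijection between the set of
order homomorphisms from `R` to the down-set lattice of `Q` and the set of order
homomorphisms from `Q` to the down-set lattice of `R`. -/
theorem stmt17 {R Q : Type*} [PartialOrder R] [PartialOrder Q] [Finite R] [Finite Q] :
    Nonempty ((R →o LowerSet Q) ≃ (Q →o LowerSet R)) := by
  exact ⟨⟨flipHom17, flipHom17, flipHom17_flip, flipHom17_flip⟩⟩
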